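/- For a nonempty closed set K ⊆ ℝ^k, the medial axis Med(K) = {p ∈ ℝ^k : there exist distinct x, y ∈ K with dist(p, K) = |p - x| = |p - y|} has Lebesgue measure zero. -/

import Mathlib

open Metric MeasureTheory
open scoped RealInnerProductSpace

lemma medial_aux {k : ℕ} (K : Set (EuclideanSpace ℝ (Fin k)))
    (p x : EuclideanSpace ℝ (Fin k)) (hx : x ∈ K)
    (hpx : Metric.infDist p K = dist p x)
    (hdiff : DifferentiableAt ℝ (fun q => Metric.infDist q K) p) :
    fderiv ℝ (fun q => Metric.infDist q K ^ 2) p =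
      (fderivInnerCLM ℝ (p - x, p - x)).comp
        ((ContinuousLinearMap.id ℝ _).prod (ContinuousLinearMap.id ℝ _)) := by
  have hid : HasFDerivAt (fun q : EuclideanSpace ℝ (Fin k) => q - x)
      (ContinuousLinearMap.id ℝ (EuclideanSpace ℝ (Fin k))) p :=
    (hasFDerivAt_id p).sub_const x
  have hinner := hid.inner ℝ hid
  have hnormsq : HasFDerivAt (fun q : EuclideanSpace ℝ (Fin k) => ‖q - x‖ ^ 2)
      ((fderivInnerCLM ℝ (p - x, p - x)).comp
        ((ContinuousLinearMap.id ℝ _).prod (ContinuousLinearMap.id ℝ _))) p := by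
    simpa only [real_inner_self_eq_norm_sq] using hinner
  have hdsq : DifferentiableAt ℝ (fun q => Metric.infDist q K ^ 2) p := hdiff.pow 2
  have hmin : IsLocalMin
      (fun q : EuclideanSpace ℝ (Fin k) => ‖q - x‖ ^ 2 - Metric.infDist q K ^ 2) p := by
    apply Filter.Eventually.of_forall
    intro q
    have h1 : Metric.infDist q K ≤ ‖q - x‖ := by
      rw [← dist_eq_norm]; exact Metric.infDist_le_dist_of_mem hx
    have h2 : Metric.infDist q K ^ 2 ≤ ‖q - x‖ ^ 2 :=
      pow_le_pow_left₀ Metric.infDist_nonneg h1 2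
    have h3 : ‖p - x‖ ^ 2 - Metric.infDist p K ^ 2 = 0 := by
      rw [hpx, dist_eq_norm]; ring
    simp only [h3]; linarith
  have hzero : fderiv ℝ
      (fun q : EuclideanSpace ℝ (Fin k) => ‖q - x‖ ^ 2 - Metric.infDist q K ^ 2) p = 0 :=
    hmin.fderiv_eq_zero
  rw [fderiv_fun_sub hnormsq.differentiableAt hdsq, hnormsq.fderiv] at hzero
  exact (sub_eq_zero.mp hzero).symm

theorem medial_axis_measure_zero (k : ℕ) (K : Set (EuclideanSpace ℝ (Fin k)))
    (hK : K.Nonempty) (hKc : IsClosed K) :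
    MeasureTheory.volume {p : EuclideanSpace ℝ (Fin k) |
      ∃ x ∈ K, ∃ y ∈ K, x ≠ y ∧
        Metric.infDist p K = dist p x ∧ Metric.infDist p K = dist p y} = 0 := by
  have hlip : LipschitzWith 1 (fun p : EuclideanSpace ℝ (Fin k) => Metric.infDist p K) :=
    Metric.lipschitz_infDist_pt K
  have hae : ∀ᵐ p ∂(volume : Measure (EuclideanSpace ℝ (Fin k))),
      DifferentiableAt ℝ (fun q => Metric.infDist q K) p :=
    hlip.ae_differentiableAt
  have hnull : volume {p : EuclideanSpace ℝ (Fin k) |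
      ¬ DifferentiableAt ℝ (fun q => Metric.infDist q K) p} = 0 :=
    (MeasureTheory.ae_iff).1 hae
  refine measure_mono_null (fun p hp => ?_) hnull
  obtain ⟨x, hx, y, hy, hxy, hpx, hpy⟩ := hp
  intro hdiff
  have h1 := medial_aux K p x hx hpx hdiff
  have h2 := medial_aux K p y hy hpy hdiff
  have heq := h1.symm.trans h2
  have happ := ContinuousLinearMap.ext_iff.mp heq (y - x)
  simp only [ContinuousLinearMap.coe_comp', Function.comp_apply,
    ContinuousLinearMap.prod_apply, ContinuousLinearMap.coe_id', id_eq,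
    fderivInnerCLM_apply] at happ
  have hsym1 : (⟪p - x, y - x⟫ : ℝ) + ⟪y - x, p - x⟫ = 2 * ⟪p - x, y - x⟫ := by
    rw [real_inner_comm (y - x)]; ring
  have hsym2 : (⟪p - y, y - x⟫ : ℝ) + ⟪y - x, p - y⟫ = 2 * ⟪p - y, y - x⟫ := by
    rw [real_inner_comm (y - x)]; ring
  rw [hsym1, hsym2] at happ
  have hzero : (⟪y - x, y - x⟫ : ℝ) = 0 := by
    have hsub := inner_sub_left (𝕜 := ℝ) (p - x) (p - y) (y - x)
    have hd : p - x - (p - y) = y - x := by abel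
    rw [hd] at hsub
    linarith
  have : y - x = 0 := by rwa [inner_self_eq_zero] at hzero
  exact hxy (sub_eq_zero.mp this).symm
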